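/- For every natural number q ≥ 2, the derivatives at s = −1 of the Hurwitz zeta function at rational points satisfy Σ_{r=1}^{q−1} ζ'(−1, r/q) = (1/q − 1) · ζ'(−1) − (1/(12q)) · log q, where ζ'(−1) is the derivative of the Riemann zeta function at −1. -/

import Mathlib

open HurwitzZeta

theorem hurwitzZeta_deriv_neg_one_sum (q : ℕ) (hq : 2 ≤ q) :
    ∑ r ∈ Finset.Ico 1 q,
        deriv (fun s => hurwitzZeta (((r : ℝ) / q : ℝ) : UnitAddCircle) s) (-1) =
      ((1 / q : ℂ) - 1) * deriv riemannZeta (-1)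
        - (1 / (12 * q) : ℂ) * (Real.log q : ℂ) := by
  haveI : NeZero q := ⟨by omega⟩
  have hq0 : (q : ℂ) ≠ 0 := Nat.cast_ne_zero.mpr (by omega)
  -- The LFunction of the constant function 1 mod q agrees with riemannZeta away from 1
  have hF : Set.EqOn (ZMod.LFunction (N := q) 1) riemannZeta {(1 : ℂ)}ᶜ := by
    have hU : IsOpen ({(1 : ℂ)}ᶜ) := isOpen_compl_singleton
    have hf : AnalyticOnNhd ℂ (ZMod.LFunction (N := q) 1) {(1 : ℂ)}ᶜ := by
      refine DifferentiableOn.analyticOnNhd (fun s hs => ?_) hU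
      exact (ZMod.differentiableAt_LFunction 1 s (Or.inl hs)).differentiableWithinAt
    have hg : AnalyticOnNhd ℂ riemannZeta {(1 : ℂ)}ᶜ := by
      refine DifferentiableOn.analyticOnNhd (fun s hs => ?_) hU
      exact (differentiableAt_riemannZeta hs).differentiableWithinAt
    refine AnalyticOnNhd.eqOn_of_preconnected_of_eventuallyEq hf hg
      (isConnected_compl_singleton_of_one_lt_rank (by simp) _).isPreconnected
      (z₀ := 2) (by norm_num) ?_
    have hev : ∀ᶠ s : ℂ in nhds 2, 1 < s.re := by
      have : IsOpen {s : ℂ | 1 < s.re} := isOpen_lt continuous_const Complex.continuous_re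
      exact this.eventually_mem (by norm_num)
    filter_upwards [hev] with s hs
    rw [ZMod.LFunction_eq_LSeries 1 hs]
    exact LSeries_one_eq_riemannZeta hs
  -- Multiplication theorem on the complement of 1
  have key : ∀ s : ℂ, s ≠ 1 → ∑ j : ZMod q, hurwitzZeta (ZMod.toAddCircle j) s
      = (q : ℂ) ^ s * riemannZeta s := by
    intro s hs
    have h1 := hF hs
    rw [ZMod.LFunction] at h1
    simp only [Pi.one_apply, one_mul] at h1
    rw [← h1, ← mul_assoc, ← Complex.cpow_add _ _ hq0]
    simp
  -- Reindex the sum over ZMod q as a sum over range q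
  have hsum : ∀ s : ℂ, ∑ j : ZMod q, hurwitzZeta (ZMod.toAddCircle j) s
      = ∑ r ∈ Finset.range q, hurwitzZeta (((r : ℝ) / q : ℝ) : UnitAddCircle) s := by
    intro s
    refine Finset.sum_nbij' (fun j => j.val) (fun r => (r : ZMod q)) ?_ ?_ ?_ ?_ ?_
    · intro j _; exact Finset.mem_range.mpr (ZMod.val_lt j)
    · intro r _; exact Finset.mem_univ _
    · intro j _; simp [ZMod.natCast_val, ZMod.cast_id]
    · intro r hr; exact ZMod.val_natCast_of_lt (Finset.mem_range.mp hr)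
    · intro j _
      rw [ZMod.toAddCircle_apply]
  -- the key function identity on a neighborhood of -1
  have hS : ∀ s : ℂ, s ≠ 1 →
      ∑ r ∈ Finset.Ico 1 q, hurwitzZeta (((r : ℝ) / q : ℝ) : UnitAddCircle) s
        = (q : ℂ) ^ s * riemannZeta s - riemannZeta s := by
    intro s hs
    have h2 := (hsum s).symm.trans (key s hs)
    rw [Finset.range_eq_Ico, Finset.sum_eq_sum_Ico_succ_bot (by omega : 0 < q)] at h2
    have h0 : hurwitzZeta ((((0 : ℕ) : ℝ) / q : ℝ) : UnitAddCircle) s = riemannZeta s := by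
      norm_num
      exact congrFun hurwitzZeta_zero s
    rw [h0] at h2
    linear_combination h2
  have hne : (-1 : ℂ) ≠ 1 := by norm_num
  have hdiff : ∀ r ∈ Finset.Ico 1 q, DifferentiableAt ℂ
      (fun s => hurwitzZeta (((r : ℝ) / q : ℝ) : UnitAddCircle) s) (-1) :=
    fun r _ => differentiableAt_hurwitzZeta _ hne
  rw [← deriv_fun_sum hdiff]
  have hEv : (fun s : ℂ => ∑ r ∈ Finset.Ico 1 q,
        hurwitzZeta (((r : ℝ) / q : ℝ) : UnitAddCircle) s)
      =ᶠ[nhds (-1)] fun s => (q : ℂ) ^ s * riemannZeta s - riemannZeta s := by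
    filter_upwards [isOpen_compl_singleton.eventually_mem
      (show (-1 : ℂ) ∈ {(1 : ℂ)}ᶜ by norm_num)] with s hs
    exact hS s hs
  rw [hEv.deriv_eq]
  have hz : HasDerivAt riemannZeta (deriv riemannZeta (-1)) (-1) :=
    (differentiableAt_riemannZeta hne).hasDerivAt
  have hc : HasDerivAt (fun s : ℂ => (q : ℂ) ^ s)
      ((q : ℂ) ^ (-1 : ℂ) * Complex.log q) (-1) :=
    (Complex.hasStrictDerivAt_const_cpow (Or.inl hq0)).hasDerivAt
  rw [((hc.fun_mul hz).fun_sub hz).deriv]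
  have hzeta : riemannZeta (-1) = -1 / 12 := by
    have h := riemannZeta_neg_nat_eq_bernoulli 1
    norm_num [bernoulli] at h
    rw [show ((-1 : ℂ) / 12) = -12⁻¹ by norm_num]
    simpa using h
  rw [Complex.cpow_neg_one, hzeta, ← Complex.natCast_log]
  field_simp
  ring
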